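/- Let T₁, …, Tₙ with Tᵢ = [[0, Bᵢ], [Cᵢ, 0]] be off-diagonal operator matrices on H₁ ⊕ H₂, let 0 ≤ α ≤ 1 and p ≥ 2. Then for every unit vector k in H₁ ⊕ H₂, Σᵢ |⟨Tᵢ k, k⟩|^p ≤ ⟨[[ Σᵢ (α|Cᵢ|^p + (1-α)|Bᵢ*|^p), 0], [0, Σᵢ (α|Bᵢ|^p + (1-α)|Cᵢ*|^p)]] k, k⟩. -/

import Mathlib

open scoped InnerProductSpace
open ContinuousLinearMap Complex

variable {H₁ H₂ : Type*}
  [NormedAddCommGroup H₁] [InnerProductSpace ℂ H₁] [CompleteSpace H₁]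
  [NormedAddCommGroup H₂] [InnerProductSpace ℂ H₂] [CompleteSpace H₂]

/-- `T ^ e` for a (positive) operator `T`, via the continuous functional calculus. -/
noncomputable def opow {E : Type*} [NormedAddCommGroup E] [InnerProductSpace ℂ E]
    [CompleteSpace E] (T : E →L[ℂ] E) (e : ℝ) : E →L[ℂ] E :=
  cfc (fun t : ℝ => t ^ e) T

/-- The absolute value `|T| = (T*T)^(1/2)` of an operator between Hilbert spaces. -/
noncomputable def oabs {E F : Type*} [NormedAddCommGroup E] [InnerProductSpace ℂ E]
    [CompleteSpace E] [NormedAddCommGroup F] [InnerProductSpace ℂ F] [CompleteSpace F]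
    (T : E →L[ℂ] F) : E →L[ℂ] E :=
  cfc Real.sqrt ((ContinuousLinearMap.adjoint T).comp T)

section Scalar

lemma hoelder2 {x₁ x₂ y₁ y₂ θ : ℝ} (hx₁ : 0 ≤ x₁) (hx₂ : 0 ≤ x₂) (hy₁ : 0 ≤ y₁)
    (hy₂ : 0 ≤ y₂) (hθ0 : 0 ≤ θ) (hθ1 : θ ≤ 1) :
    x₁ ^ θ * y₁ ^ (1 - θ) + x₂ ^ θ * y₂ ^ (1 - θ) ≤ (x₁ + x₂) ^ θ * (y₁ + y₂) ^ (1 - θ) := by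
  rcases eq_or_lt_of_le (by positivity : (0:ℝ) ≤ x₁ + x₂) with hX | hX
  · have h1 : x₁ = 0 := by linarith
    have h2 : x₂ = 0 := by linarith
    subst h1; subst h2
    rcases eq_or_lt_of_le hθ0 with h | h
    · simp only [← h, Real.rpow_zero, one_mul, sub_zero, Real.rpow_one, add_zero]
      exact le_rfl
    · simp only [Real.zero_rpow h.ne', zero_mul, add_zero, zero_add]
      positivity
  rcases eq_or_lt_of_le (by positivity : (0:ℝ) ≤ y₁ + y₂) with hY | hY
  · have h1 : y₁ = 0 := by linarith
    have h2 : y₂ = 0 := by linarith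
    subst h1; subst h2
    rcases eq_or_lt_of_le hθ1 with h | h
    · simp only [h, Real.rpow_zero, one_mul, sub_self, Real.rpow_one, mul_one, add_zero]
      exact le_rfl
    · have hne : 1 - θ ≠ 0 := by intro hc; apply absurd hθ1; intro _; nlinarith
      simp only [Real.zero_rpow hne, mul_zero, add_zero, zero_add]
      positivity
  · have e : ∀ x y : ℝ, 0 ≤ x → 0 ≤ y →
        (x₁ + x₂) ^ θ * (y₁ + y₂) ^ (1 - θ) * ((x / (x₁ + x₂)) ^ θ * (y / (y₁ + y₂)) ^ (1 - θ))
          = x ^ θ * y ^ (1 - θ) := by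
      intro x y hx hy
      rw [Real.div_rpow hx hX.le, Real.div_rpow hy hY.le]
      field_simp [Real.rpow_pos_of_pos hX θ |>.ne', Real.rpow_pos_of_pos hY (1-θ) |>.ne']
    have k₁ := Real.geom_mean_le_arith_mean2_weighted (w₁ := θ) (w₂ := 1 - θ)
      hθ0 (by linarith) (div_nonneg hx₁ hX.le) (div_nonneg hy₁ hY.le) (by ring)
    have k₂ := Real.geom_mean_le_arith_mean2_weighted (w₁ := θ) (w₂ := 1 - θ)
      hθ0 (by linarith) (div_nonneg hx₂ hX.le) (div_nonneg hy₂ hY.le) (by ring)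
    have hXY : 0 ≤ (x₁ + x₂) ^ θ * (y₁ + y₂) ^ (1 - θ) := by positivity
    calc x₁ ^ θ * y₁ ^ (1 - θ) + x₂ ^ θ * y₂ ^ (1 - θ)
        = (x₁ + x₂) ^ θ * (y₁ + y₂) ^ (1 - θ) *
            ((x₁ / (x₁ + x₂)) ^ θ * (y₁ / (y₁ + y₂)) ^ (1 - θ)) +
          (x₁ + x₂) ^ θ * (y₁ + y₂) ^ (1 - θ) *
            ((x₂ / (x₁ + x₂)) ^ θ * (y₂ / (y₁ + y₂)) ^ (1 - θ)) := by
          rw [e x₁ y₁ hx₁ hy₁, e x₂ y₂ hx₂ hy₂]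
      _ ≤ (x₁ + x₂) ^ θ * (y₁ + y₂) ^ (1 - θ) *
            (θ * (x₁ / (x₁ + x₂)) + (1 - θ) * (y₁ / (y₁ + y₂))) +
          (x₁ + x₂) ^ θ * (y₁ + y₂) ^ (1 - θ) *
            (θ * (x₂ / (x₁ + x₂)) + (1 - θ) * (y₂ / (y₁ + y₂))) := by
          gcongr
      _ = (x₁ + x₂) ^ θ * (y₁ + y₂) ^ (1 - θ) := by
          rw [← mul_add]
          have : θ * (x₁ / (x₁ + x₂)) + (1 - θ) * (y₁ / (y₁ + y₂)) +
              (θ * (x₂ / (x₁ + x₂)) + (1 - θ) * (y₂ / (y₁ + y₂))) = 1 := by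
            field_simp
            ring
          rw [this, mul_one]

lemma pair_bound {b c u v Q R p : ℝ} (hp : 2 ≤ p) (hb : 0 ≤ b) (hc : 0 ≤ c) (hu : 0 ≤ u)
    (hv : 0 ≤ v) (huv : u ^ 2 + v ^ 2 = 1) (hQ : 0 ≤ Q) (hR : 0 ≤ R)
    (hbQ : b ^ p ≤ Q * v ^ (p - 2)) (hcR : c ^ p ≤ R * u ^ (p - 2)) :
    (b * u + c * v) ^ p ≤ Q + R := by
  have hp0 : (0:ℝ) < p := by linarith
  have hp1 : (0:ℝ) < p - 1 := by linarith
  set w₁ : ℝ := v ^ ((p - 2)/p) * u with hw₁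
  set w₂ : ℝ := u ^ ((p - 2)/p) * v with hw₂
  have hw₁0 : 0 ≤ w₁ := by positivity
  have hw₂0 : 0 ≤ w₂ := by positivity
  -- step 1
  have hble : b ≤ Q ^ (1/p) * v ^ ((p - 2)/p) := by
    have h1 : b = (b ^ p) ^ (1/p) := by
      rw [← Real.rpow_mul hb, mul_one_div_cancel hp0.ne', Real.rpow_one]
    have h2 : (Q * v ^ (p - 2)) ^ (1/p) = Q ^ (1/p) * v ^ ((p - 2)/p) := by
      rw [Real.mul_rpow hQ (by positivity), ← Real.rpow_mul hv]
      ring_nf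
    rw [h1, ← h2]
    exact Real.rpow_le_rpow (by positivity) hbQ (by positivity)
  have hcle : c ≤ R ^ (1/p) * u ^ ((p - 2)/p) := by
    have h1 : c = (c ^ p) ^ (1/p) := by
      rw [← Real.rpow_mul hc, mul_one_div_cancel hp0.ne', Real.rpow_one]
    have h2 : (R * u ^ (p - 2)) ^ (1/p) = R ^ (1/p) * u ^ ((p - 2)/p) := by
      rw [Real.mul_rpow hR (by positivity), ← Real.rpow_mul hu]
      ring_nf
    rw [h1, ← h2]
    exact Real.rpow_le_rpow (by positivity) hcR (by positivity)
  -- step 2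
  have step2 : b * u + c * v ≤ Q ^ (1/p) * w₁ + R ^ (1/p) * w₂ := by
    rw [hw₁, hw₂]
    have := mul_le_mul_of_nonneg_right hble hu
    have := mul_le_mul_of_nonneg_right hcle hv
    rw [mul_assoc] at *
    linarith
  -- step 3 : Hölder
  set y₁ : ℝ := w₁ ^ (p/(p - 1)) with hy₁
  set y₂ : ℝ := w₂ ^ (p/(p - 1)) with hy₂
  have hy₁w : y₁ ^ (1 - 1/p) = w₁ := by
    rw [hy₁, ← Real.rpow_mul hw₁0]
    rw [show p/(p - 1) * (1 - 1/p) = 1 by field_simp]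
    exact Real.rpow_one _
  have hy₂w : y₂ ^ (1 - 1/p) = w₂ := by
    rw [hy₂, ← Real.rpow_mul hw₂0]
    rw [show p/(p - 1) * (1 - 1/p) = 1 by field_simp]
    exact Real.rpow_one _
  have hold : Q ^ (1/p) * w₁ + R ^ (1/p) * w₂ ≤ (Q + R) ^ (1/p) * (y₁ + y₂) ^ (1 - 1/p) := by
    rw [← hy₁w, ← hy₂w]
    exact hoelder2 hQ hR (by positivity) (by positivity) (by positivity)
      (by rw [div_le_one hp0]; linarith)
  -- step 4 : y₁ + y₂ ≤ 1
  have hsum : y₁ + y₂ ≤ 1 := by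
    have e₁ : y₁ = (v ^ 2 : ℝ) ^ ((p - 2)/(2*(p - 1))) * (u ^ 2 : ℝ) ^ (p/(2*(p - 1))) := by
      rw [hy₁, hw₁, Real.mul_rpow (by positivity) hu, ← Real.rpow_mul hv,
        ← Real.rpow_natCast_mul hv 2, ← Real.rpow_natCast_mul hu 2]
      norm_num
      rw [show (p - 2)/p * (p/(p - 1)) = 2 * ((p - 2)/(2*(p - 1))) by field_simp,
        show p/(p - 1) = 2 * (p/(2*(p - 1))) by field_simp]
    have e₂ : y₂ = (u ^ 2 : ℝ) ^ ((p - 2)/(2*(p - 1))) * (v ^ 2 : ℝ) ^ (p/(2*(p - 1))) := by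
      rw [hy₂, hw₂, Real.mul_rpow (by positivity) hv, ← Real.rpow_mul hu,
        ← Real.rpow_natCast_mul hu 2, ← Real.rpow_natCast_mul hv 2]
      norm_num
      rw [show (p - 2)/p * (p/(p - 1)) = 2 * ((p - 2)/(2*(p - 1))) by field_simp,
        show p/(p - 1) = 2 * (p/(2*(p - 1))) by field_simp]
    have g₁ := Real.geom_mean_le_arith_mean2_weighted
      (w₁ := (p - 2)/(2*(p - 1))) (w₂ := p/(2*(p - 1))) (p₁ := v ^ 2) (p₂ := u ^ 2)
      (div_nonneg (by linarith) (by linarith)) (div_nonneg (by linarith) (by linarith))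
      (by positivity) (by positivity)
      (by field_simp; ring)
    have g₂ := Real.geom_mean_le_arith_mean2_weighted
      (w₁ := (p - 2)/(2*(p - 1))) (w₂ := p/(2*(p - 1))) (p₁ := u ^ 2) (p₂ := v ^ 2)
      (div_nonneg (by linarith) (by linarith)) (div_nonneg (by linarith) (by linarith))
      (by positivity) (by positivity)
      (by field_simp; ring)
    have hid : (p - 2)/(2*(p - 1)) * (v ^ 2) + p/(2*(p - 1)) * (u ^ 2) +
        ((p - 2)/(2*(p - 1)) * (u ^ 2) + p/(2*(p - 1)) * (v ^ 2)) = 1 := by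
      have h1 : (p - 2)/(2*(p - 1)) + p/(2*(p - 1)) = 1 := by field_simp; ring
      calc (p - 2)/(2*(p - 1)) * (v ^ 2) + p/(2*(p - 1)) * (u ^ 2) +
          ((p - 2)/(2*(p - 1)) * (u ^ 2) + p/(2*(p - 1)) * (v ^ 2))
          = ((p - 2)/(2*(p - 1)) + p/(2*(p - 1))) * (u ^ 2 + v ^ 2) := by ring
        _ = 1 := by rw [h1, huv, one_mul]
    rw [e₁, e₂]
    linarith
  -- conclude
  have hle1 : (y₁ + y₂) ^ (1 - 1/p) ≤ 1 :=
    Real.rpow_le_one (by positivity) hsum (by rw [sub_nonneg, div_le_one hp0]; linarith)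
  have final : b * u + c * v ≤ (Q + R) ^ (1/p) := by
    calc b * u + c * v ≤ (Q + R) ^ (1/p) * (y₁ + y₂) ^ (1 - 1/p) := le_trans step2 hold
      _ ≤ (Q + R) ^ (1/p) * 1 := by
        exact mul_le_mul_of_nonneg_left hle1 (by positivity)
      _ = (Q + R) ^ (1/p) := mul_one _
  calc (b * u + c * v) ^ p ≤ ((Q + R) ^ (1/p)) ^ p :=
        Real.rpow_le_rpow (by positivity) final hp0.le
    _ = Q + R := by
        rw [← Real.rpow_mul (by positivity), one_div_mul_cancel hp0.ne', Real.rpow_one]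


end Scalar

section Op

variable {E F : Type*} [NormedAddCommGroup E] [InnerProductSpace ℂ E] [CompleteSpace E]
  [NormedAddCommGroup F] [InnerProductSpace ℂ F] [CompleteSpace F]

lemma isSelfAdjoint_ACS (T : E →L[ℂ] F) : IsSelfAdjoint ((ContinuousLinearMap.adjoint T).comp T) := by
  rw [IsSelfAdjoint, star_eq_adjoint, adjoint_comp, adjoint_adjoint]

lemma re_inner_ACS (T : E →L[ℂ] F) (x : E) :
    (⟪((ContinuousLinearMap.adjoint T).comp T) x, x⟫_ℂ).re = ‖T x‖ ^ 2 := by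
  rw [comp_apply, adjoint_inner_left]
  rw [← inner_self_eq_norm_sq (𝕜 := ℂ)]
  simp

lemma ACS_nonneg (T : E →L[ℂ] F) : 0 ≤ (ContinuousLinearMap.adjoint T).comp T := by
  rw [nonneg_iff_isPositive]
  refine isPositive_def'.mpr ⟨isSelfAdjoint_ACS T, fun x => ?_⟩
  rw [reApplyInnerSelf]
  have := re_inner_ACS T x
  simp only [RCLike.re_to_complex] at *
  rw [this]; positivity

lemma opow_oabs_eq (T : E →L[ℂ] F) {p : ℝ} (hp : 0 < p) :
    opow (oabs T) p = cfc (fun t : ℝ => t ^ (p/2)) ((ContinuousLinearMap.adjoint T).comp T) := by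
  have hsa := isSelfAdjoint_ACS T
  have h0 := ACS_nonneg T
  rw [opow, oabs, ← cfc_comp' (fun t : ℝ => t ^ p) Real.sqrt _
      ((Real.continuous_rpow_const hp.le).continuousOn) (Real.continuous_sqrt.continuousOn)]
  apply cfc_congr
  intro t ht
  have ht0 : 0 ≤ t := spectrum_nonneg_of_nonneg h0 ht
  simp only []
  rw [Real.sqrt_eq_rpow, ← Real.rpow_mul ht0]
  congr 1
  ring

lemma opow_oabs_nonneg (T : E →L[ℂ] F) {p : ℝ} (hp : 0 < p) :
    0 ≤ opow (oabs T) p := by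
  rw [opow_oabs_eq T hp]
  exact cfc_nonneg fun t ht =>
    Real.rpow_nonneg (spectrum_nonneg_of_nonneg (ACS_nonneg T) ht) _

lemma re_inner_nonneg {S : E →L[ℂ] E} (hS : 0 ≤ S) (x : E) :
    0 ≤ (⟪S x, x⟫_ℂ).re := by
  rw [nonneg_iff_isPositive] at hS
  exact (Complex.le_def.mp (hS.inner_nonneg_left x)).1

lemma re_inner_mono {S₁ S₂ : E →L[ℂ] E} (h : S₁ ≤ S₂) (x : E) :
    (⟪S₁ x, x⟫_ℂ).re ≤ (⟪S₂ x, x⟫_ℂ).re := by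
  rw [ContinuousLinearMap.le_def] at h
  have := h.inner_nonneg_left x
  simp only [sub_apply, inner_sub_left, map_sub, RCLike.re_to_complex] at this
  have := (Complex.le_def.mp this).1
  simp only [Complex.sub_re, Complex.zero_re] at this
  linarith

lemma key (T : E →L[ℂ] F) {p : ℝ} (hp : 2 ≤ p) (x : E) :
    ‖T x‖ ^ p ≤ (⟪opow (oabs T) p x, x⟫_ℂ).re * ‖x‖ ^ (p - 2) := by
  have hp0 : (0:ℝ) < p := by linarith
  set A := (ContinuousLinearMap.adjoint T).comp T with hA
  have hsa := isSelfAdjoint_ACS T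
  have hA0 := ACS_nonneg T
  have hON : 0 ≤ (⟪opow (oabs T) p x, x⟫_ℂ).re := re_inner_nonneg (opow_oabs_nonneg T hp0) x
  rcases eq_or_ne (T x) 0 with h0 | h0
  · rw [h0, norm_zero, Real.zero_rpow hp0.ne']
    positivity
  have hTx : (0:ℝ) < ‖T x‖ := norm_pos_iff.mpr h0
  have hx : x ≠ 0 := by rintro rfl; simp at h0
  have hxn : (0:ℝ) < ‖x‖ := norm_pos_iff.mpr hx
  set s : ℝ := ‖T x‖ ^ 2 / ‖x‖ ^ 2 with hs
  have hs0 : 0 < s := by positivity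
  set q : ℝ := p / 2 with hqdef
  have hq : 1 ≤ q := by rw [hqdef]; linarith
  have hq0 : 0 < q := by linarith
  set c : ℝ := q * s ^ (q - 1) with hc
  set d : ℝ := s ^ q - c * s with hd
  have hsq : (0:ℝ) < s ^ q := Real.rpow_pos_of_pos hs0 q
  have tangent : ∀ t ∈ spectrum ℝ A, c * t + d ≤ t ^ q := by
    intro t ht
    have ht0 : 0 ≤ t := spectrum_nonneg_of_nonneg hA0 ht
    have hb := one_add_mul_self_le_rpow_one_add (s := t / s - 1)
      (by have : 0 ≤ t / s := div_nonneg ht0 hs0.le; linarith) hq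
    rw [show (1 : ℝ) + (t / s - 1) = t / s by ring] at hb
    have e1 : (t / s) ^ q = t ^ q / s ^ q := Real.div_rpow ht0 hs0.le q
    have e2 : s ^ q = s ^ (q - 1) * s := by
      rw [← Real.rpow_add_one hs0.ne' (q - 1)]; norm_num
    have hmul := mul_le_mul_of_nonneg_left hb hsq.le
    rw [e1, mul_div_cancel₀ _ hsq.ne'] at hmul
    calc c * t + d = s ^ q * (1 + q * (t / s - 1)) := by
          rw [hd, hc]; rw [e2]; field_simp; ring
      _ ≤ t ^ q := hmul
  have hmono : cfc (fun t : ℝ => c * t + d) A ≤ cfc (fun t : ℝ => t ^ q) A :=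
    cfc_mono tangent (by fun_prop)
      ((Real.continuous_rpow_const hq0.le).continuousOn)
  have hlin : cfc (fun t : ℝ => c * t + d) A = c • A + d • 1 := by
    rw [cfc_add A (fun t : ℝ => c * t) (fun _ : ℝ => d) (by fun_prop) (by fun_prop),
      cfc_const_mul_id c A, cfc_const d A, Algebra.algebraMap_eq_smul_one]
  have hopow : opow (oabs T) p = cfc (fun t : ℝ => t ^ q) A := opow_oabs_eq T hp0
  have hineq := re_inner_mono (hlin ▸ hmono) x
  have hnx : (⟪x, x⟫_ℂ).re = ‖x‖ ^ 2 := by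
    rw [← inner_self_eq_norm_sq (𝕜 := ℂ) x]; simp
  have hcomp : (⟪(c • A + d • 1) x, x⟫_ℂ).re = c * ‖T x‖ ^ 2 + d * ‖x‖ ^ 2 := by
    have hre := re_inner_ACS T x
    rw [ContinuousLinearMap.add_apply, ContinuousLinearMap.smul_apply,
      ContinuousLinearMap.smul_apply, ContinuousLinearMap.one_apply, inner_add_left,
      ← algebraMap_smul ℂ c (A x), ← algebraMap_smul ℂ d x, Complex.coe_algebraMap,
      inner_smul_left, inner_smul_left, Complex.add_re]
    simp only [Complex.conj_ofReal, Complex.mul_re, Complex.ofReal_re, Complex.ofReal_im,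
      zero_mul, sub_zero]
    rw [hre, hnx]
  have hTx2 : ‖T x‖ ^ 2 = s * ‖x‖ ^ 2 := by rw [hs]; field_simp
  have hval : c * ‖T x‖ ^ 2 + d * ‖x‖ ^ 2 = s ^ q * ‖x‖ ^ 2 := by
    rw [hTx2, hd]; ring
  have hge : s ^ q * ‖x‖ ^ 2 ≤ (⟪opow (oabs T) p x, x⟫_ℂ).re := by
    rw [hopow, ← hval, ← hcomp]; exact hineq
  have e1 : ((‖T x‖ : ℝ) ^ 2) ^ q = ‖T x‖ ^ p := by
    rw [← Real.rpow_natCast_mul (norm_nonneg _) 2 q, hqdef]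
    congr 1
    push_cast
    ring
  have e2 : ((‖x‖ : ℝ) ^ 2) ^ q = ‖x‖ ^ p := by
    rw [← Real.rpow_natCast_mul (norm_nonneg _) 2 q, hqdef]
    congr 1
    push_cast
    ring
  have e3 : (‖x‖ : ℝ) ^ 2 * ‖x‖ ^ (p - 2) = ‖x‖ ^ p := by
    rw [← Real.rpow_natCast ‖x‖ 2, ← Real.rpow_add hxn]
    congr 1
    push_cast
    ring
  have hfin : s ^ q * ‖x‖ ^ 2 * ‖x‖ ^ (p - 2) = ‖T x‖ ^ p := by
    rw [hs, Real.div_rpow (by positivity) (by positivity), e1, e2, mul_assoc, e3,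
      div_mul_cancel₀]
    positivity
  calc ‖T x‖ ^ p = s ^ q * ‖x‖ ^ 2 * ‖x‖ ^ (p - 2) := hfin.symm
    _ ≤ (⟪opow (oabs T) p x, x⟫_ℂ).re * ‖x‖ ^ (p - 2) :=
        mul_le_mul_of_nonneg_right hge (Real.rpow_nonneg (norm_nonneg _) _)


lemma re_inner_combo {E : Type*} [NormedAddCommGroup E] [InnerProductSpace ℂ E]
    (a b : ℝ) (X Y : E →L[ℂ] E) (x : E) :
    (⟪(a • X + b • Y) x, x⟫_ℂ).re = a * (⟪X x, x⟫_ℂ).re + b * (⟪Y x, x⟫_ℂ).re := by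
  rw [ContinuousLinearMap.add_apply, ContinuousLinearMap.smul_apply,
    ContinuousLinearMap.smul_apply, inner_add_left, ← algebraMap_smul ℂ a (X x),
    ← algebraMap_smul ℂ b (Y x), Complex.coe_algebraMap, inner_smul_left, inner_smul_left,
    Complex.add_re]
  simp [Complex.conj_ofReal, Complex.mul_re, Complex.ofReal_re, Complex.ofReal_im]

end Op

section PerTerm

lemma per_term (B : H₂ →L[ℂ] H₁) (C : H₁ →L[ℂ] H₂) {α p : ℝ}
    (hα0 : 0 ≤ α) (hα1 : α ≤ 1) (hp : 2 ≤ p) (k₁ : H₁) (k₂ : H₂)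
    (hk : ‖k₁‖ ^ 2 + ‖k₂‖ ^ 2 = 1) :
    ‖⟪B k₂, k₁⟫_ℂ + ⟪C k₁, k₂⟫_ℂ‖ ^ p ≤
      α * (⟪opow (oabs C) p k₁, k₁⟫_ℂ).re +
        (1 - α) * (⟪opow (oabs (ContinuousLinearMap.adjoint B)) p k₁, k₁⟫_ℂ).re +
      (α * (⟪opow (oabs B) p k₂, k₂⟫_ℂ).re +
        (1 - α) * (⟪opow (oabs (ContinuousLinearMap.adjoint C)) p k₂, k₂⟫_ℂ).re) := by
  have hp0 : (0:ℝ) < p := by linarith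
  set u : ℝ := ‖k₁‖ with hu
  set v : ℝ := ‖k₂‖ with hv
  set b : ℝ := ‖B k₂‖ with hbd
  set c : ℝ := ‖C k₁‖ with hcd
  set b' : ℝ := ‖(ContinuousLinearMap.adjoint B) k₁‖ with hbd'
  set c' : ℝ := ‖(ContinuousLinearMap.adjoint C) k₂‖ with hcd'
  set QC : ℝ := (⟪opow (oabs C) p k₁, k₁⟫_ℂ).re with hQC
  set QB : ℝ := (⟪opow (oabs B) p k₂, k₂⟫_ℂ).re with hQB
  set RB : ℝ := (⟪opow (oabs (ContinuousLinearMap.adjoint B)) p k₁, k₁⟫_ℂ).re with hRB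
  set RC : ℝ := (⟪opow (oabs (ContinuousLinearMap.adjoint C)) p k₂, k₂⟫_ℂ).re with hRC
  have hQC0 : 0 ≤ QC := re_inner_nonneg (opow_oabs_nonneg C hp0) k₁
  have hQB0 : 0 ≤ QB := re_inner_nonneg (opow_oabs_nonneg B hp0) k₂
  have hRB0 : 0 ≤ RB := re_inner_nonneg (opow_oabs_nonneg _ hp0) k₁
  have hRC0 : 0 ≤ RC := re_inner_nonneg (opow_oabs_nonneg _ hp0) k₂
  have kC : c ^ p ≤ QC * u ^ (p - 2) := key C hp k₁
  have kB : b ^ p ≤ QB * v ^ (p - 2) := key B hp k₂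
  have kB' : b' ^ p ≤ RB * u ^ (p - 2) := key _ hp k₁
  have kC' : c' ^ p ≤ RC * v ^ (p - 2) := key _ hp k₂
  have K1 : (b * u + c * v) ^ p ≤ QB + QC :=
    pair_bound hp (norm_nonneg _) (norm_nonneg _) (norm_nonneg _) (norm_nonneg _)
      hk hQB0 hQC0 kB kC
  have K2 : (b' * v + c' * u) ^ p ≤ RB + RC :=
    pair_bound hp (norm_nonneg _) (norm_nonneg _) (norm_nonneg _) (norm_nonneg _)
      (by rw [add_comm]; exact hk) hRB0 hRC0 kB' kC'
  -- step A
  have hsplit : ∀ z : ℂ, ‖z‖ = ‖z‖ ^ α * ‖z‖ ^ (1 - α) := by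
    intro z
    rw [← Real.rpow_add_of_nonneg (norm_nonneg _) hα0 (by linarith),
      show α + (1 - α) = 1 by ring, Real.rpow_one]
  have hX : ‖⟪B k₂, k₁⟫_ℂ‖ ≤ (b * u) ^ α * (b' * v) ^ (1 - α) := by
    have h1 : ‖⟪B k₂, k₁⟫_ℂ‖ ≤ b * u := norm_inner_le_norm _ _
    have h2 : ‖⟪B k₂, k₁⟫_ℂ‖ ≤ b' * v := by
      rw [← adjoint_inner_right B k₂ k₁, norm_inner_symm]
      exact norm_inner_le_norm _ _
    rw [hsplit ⟪B k₂, k₁⟫_ℂ]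
    exact mul_le_mul (Real.rpow_le_rpow (norm_nonneg _) h1 hα0)
      (Real.rpow_le_rpow (norm_nonneg _) h2 (by linarith))
      (by positivity) (by positivity)
  have hY : ‖⟪C k₁, k₂⟫_ℂ‖ ≤ (c * v) ^ α * (c' * u) ^ (1 - α) := by
    have h1 : ‖⟪C k₁, k₂⟫_ℂ‖ ≤ c * v := norm_inner_le_norm _ _
    have h2 : ‖⟪C k₁, k₂⟫_ℂ‖ ≤ c' * u := by
      rw [← adjoint_inner_right C k₁ k₂, norm_inner_symm]
      exact norm_inner_le_norm _ _
    rw [hsplit ⟪C k₁, k₂⟫_ℂ]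
    exact mul_le_mul (Real.rpow_le_rpow (norm_nonneg _) h1 hα0)
      (Real.rpow_le_rpow (norm_nonneg _) h2 (by linarith))
      (by positivity) (by positivity)
  have stepA : ‖⟪B k₂, k₁⟫_ℂ + ⟪C k₁, k₂⟫_ℂ‖ ≤
      (b * u + c * v) ^ α * (b' * v + c' * u) ^ (1 - α) := by
    calc ‖⟪B k₂, k₁⟫_ℂ + ⟪C k₁, k₂⟫_ℂ‖ ≤ ‖⟪B k₂, k₁⟫_ℂ‖ + ‖⟪C k₁, k₂⟫_ℂ‖ := norm_add_le _ _
      _ ≤ (b * u) ^ α * (b' * v) ^ (1 - α) + (c * v) ^ α * (c' * u) ^ (1 - α) := by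
          exact add_le_add hX hY
      _ ≤ (b * u + c * v) ^ α * (b' * v + c' * u) ^ (1 - α) :=
          hoelder2 (by positivity) (by positivity) (by positivity) (by positivity) hα0 hα1
  -- step C and D
  have stepC : ‖⟪B k₂, k₁⟫_ℂ + ⟪C k₁, k₂⟫_ℂ‖ ^ p ≤
      ((b * u + c * v) ^ p) ^ α * ((b' * v + c' * u) ^ p) ^ (1 - α) := by
    have h := Real.rpow_le_rpow (norm_nonneg _) stepA hp0.le
    rwa [Real.mul_rpow (by positivity) (by positivity), ← Real.rpow_mul (by positivity),
      ← Real.rpow_mul (by positivity), mul_comm α p, mul_comm (1 - α) p,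
      Real.rpow_mul (by positivity) p α, Real.rpow_mul (by positivity) p (1 - α)] at h
  have stepD : ((b * u + c * v) ^ p) ^ α * ((b' * v + c' * u) ^ p) ^ (1 - α) ≤
      α * ((b * u + c * v) ^ p) + (1 - α) * ((b' * v + c' * u) ^ p) :=
    Real.geom_mean_le_arith_mean2_weighted hα0 (by linarith) (by positivity) (by positivity)
      (by ring)
  have stepE : α * ((b * u + c * v) ^ p) + (1 - α) * ((b' * v + c' * u) ^ p) ≤
      α * (QB + QC) + (1 - α) * (RB + RC) :=
    add_le_add (mul_le_mul_of_nonneg_left K1 hα0)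
      (mul_le_mul_of_nonneg_left K2 (by linarith))
  calc ‖⟪B k₂, k₁⟫_ℂ + ⟪C k₁, k₂⟫_ℂ‖ ^ p
      ≤ α * (QB + QC) + (1 - α) * (RB + RC) := le_trans stepC (le_trans stepD stepE)
    _ = α * QC + (1 - α) * RB + (α * QB + (1 - α) * RC) := by ring

end PerTerm

theorem berezin_euclidean_off_diagonal {n : ℕ}
    (B : Fin n → (H₂ →L[ℂ] H₁)) (C : Fin n → (H₁ →L[ℂ] H₂))
    (α p : ℝ) (hα0 : 0 ≤ α) (hα1 : α ≤ 1) (hp : 2 ≤ p)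
    (k₁ : H₁) (k₂ : H₂) (hk : ‖k₁‖ ^ 2 + ‖k₂‖ ^ 2 = 1) :
    ∑ i, ‖⟪B i k₂, k₁⟫_ℂ + ⟪C i k₁, k₂⟫_ℂ‖ ^ p ≤
      (⟪(∑ i, (α • opow (oabs (C i)) p +
          (1 - α) • opow (oabs (ContinuousLinearMap.adjoint (B i))) p)) k₁, k₁⟫_ℂ).re +
      (⟪(∑ i, (α • opow (oabs (B i)) p +
          (1 - α) • opow (oabs (ContinuousLinearMap.adjoint (C i))) p)) k₂, k₂⟫_ℂ).re := by
  have hL₁ : (⟪(∑ i, (α • opow (oabs (C i)) p +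
      (1 - α) • opow (oabs (ContinuousLinearMap.adjoint (B i))) p)) k₁, k₁⟫_ℂ).re =
      ∑ i, (α * (⟪opow (oabs (C i)) p k₁, k₁⟫_ℂ).re +
        (1 - α) * (⟪opow (oabs (ContinuousLinearMap.adjoint (B i))) p k₁, k₁⟫_ℂ).re) := by
    rw [ContinuousLinearMap.sum_apply, sum_inner, Complex.re_sum]
    exact Finset.sum_congr rfl fun i _ => re_inner_combo α (1 - α) _ _ k₁
  have hL₂ : (⟪(∑ i, (α • opow (oabs (B i)) p +
      (1 - α) • opow (oabs (ContinuousLinearMap.adjoint (C i))) p)) k₂, k₂⟫_ℂ).re =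
      ∑ i, (α * (⟪opow (oabs (B i)) p k₂, k₂⟫_ℂ).re +
        (1 - α) * (⟪opow (oabs (ContinuousLinearMap.adjoint (C i))) p k₂, k₂⟫_ℂ).re) := by
    rw [ContinuousLinearMap.sum_apply, sum_inner, Complex.re_sum]
    exact Finset.sum_congr rfl fun i _ => re_inner_combo α (1 - α) _ _ k₂
  rw [hL₁, hL₂, ← Finset.sum_add_distrib]
  exact Finset.sum_le_sum fun i _ => per_term (B i) (C i) hα0 hα1 hp k₁ k₂ hk
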